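/- arXiv:2404.11089 — 4 statements merged into one kernel-verified Lean document; each statement's English description precedes it below -/
import Mathlib

section
/- Let Ω ⊂ ℝⁿ be an open bounded set, let β : ℝ → ℝ be bounded and Lipschitz continuous, set ‖β‖_{W¹_∞} := max{‖β‖_∞, [β]} where [β] is the Lipschitz constant of β, and let ν ∈ [1,2]. Define g_ν(u,p,ω) := (ω·p + β(u)|p|^{2−ν})₋. Then for all u₁, u₂ ∈ L₂(Ω), p₁, p₂ ∈ L₂(Ω, ℝⁿ), and ω₁, ω₂ ∈ L_∞(Ω, ℝⁿ) one has ‖g_ν(u₁,p₁,ω₁) − g_ν(u₂,p₂,ω₂)‖₂ ≤ ‖ω₁‖_∞ ‖p₁ − p₂‖₂ + ‖p₂‖₂ ‖ω₁ − ω₂‖_∞ + 2 ‖β‖_{W¹_∞} ‖p₁‖₂^{2−ν} ‖u₁ − u₂‖₂^{ν−1} + |Ω|^{(ν−1)/2} ‖β‖_∞ ‖p₁ − p₂‖₂^{2−ν}. -/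
open MeasureTheory ENNReal NNReal

private lemma min_one_le_rpow {t a : ℝ} (ht : 0 ≤ t) (h0 : 0 ≤ a) (h1 : a ≤ 1) :
    min 1 t ≤ t ^ a := by
  rcases le_total 1 t with h | h
  · calc min 1 t ≤ 1 := min_le_left _ _
      _ = t ^ (0:ℝ) := (Real.rpow_zero t).symm
      _ ≤ t ^ a := Real.rpow_le_rpow_of_exponent_le h h0
  · calc min 1 t ≤ t := min_le_right _ _
      _ = t ^ (1:ℝ) := (Real.rpow_one t).symm
      _ ≤ t ^ a := Real.rpow_le_rpow_of_exponent_ge' ht h h0 h1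

private lemma rpow_add_le_rpow_add' {x y a : ℝ} (hx : 0 ≤ x) (hy : 0 ≤ y) (h0 : 0 < a)
    (h1 : a ≤ 1) : (x + y) ^ a ≤ x ^ a + y ^ a := by
  lift x to NNReal using hx
  lift y to NNReal using hy
  have hp : 1 ≤ 1 / a := by rw [le_div_iff₀ h0]; linarith
  have h := NNReal.rpow_add_rpow_le_add (x ^ a) (y ^ a) hp
  rw [← NNReal.rpow_mul, ← NNReal.rpow_mul, mul_one_div_cancel h0.ne', NNReal.rpow_one,
    NNReal.rpow_one, one_div_one_div] at h
  exact_mod_cast h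

private lemma abs_rpow_sub_rpow_le {x y a : ℝ} (hx : 0 ≤ x) (hy : 0 ≤ y) (h0 : 0 ≤ a)
    (h1 : a ≤ 1) : |x ^ a - y ^ a| ≤ |x - y| ^ a := by
  rcases eq_or_lt_of_le h0 with rfl | h0
  · simp
  wlog hxy : y ≤ x generalizing x y
  · rw [abs_sub_comm, abs_sub_comm x y]; exact this hy hx (le_of_not_ge hxy)
  have h2 : y ^ a ≤ x ^ a := Real.rpow_le_rpow hy hxy h0.le
  rw [abs_of_nonneg (sub_nonneg.2 h2), abs_of_nonneg (sub_nonneg.2 hxy)]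
  have h3 := rpow_add_le_rpow_add' (sub_nonneg.2 hxy) hy h0 h1
  rw [sub_add_cancel] at h3
  linarith

private lemma eLpNorm_norm_rpow_le {α : Type*} {m : MeasurableSpace α} {μ : Measure α}
    {E : Type*} [NormedAddCommGroup E] (f : α → E) {a : ℝ} (h0 : 0 ≤ a) :
    eLpNorm (fun x => ‖f x‖ ^ a) (2 / ENNReal.ofReal a) μ ≤ eLpNorm f 2 μ ^ a := by
  rcases eq_or_lt_of_le h0 with rfl | h0
  · simp only [Real.rpow_zero, ENNReal.ofReal_zero, ENNReal.rpow_zero]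
    rw [ENNReal.div_zero (by norm_num), eLpNorm_exponent_top]
    calc eLpNormEssSup (fun _ : α => (1:ℝ)) μ ≤ ENNReal.ofReal 1 :=
          eLpNormEssSup_le_of_ae_bound (Filter.Eventually.of_forall fun _ => by simp)
      _ = 1 := ENNReal.ofReal_one
  · have ha : ENNReal.ofReal a ≠ 0 := by simp [ENNReal.ofReal_eq_zero, h0.not_ge]
    rw [eLpNorm_norm_rpow f h0, ENNReal.div_mul_cancel ha ENNReal.ofReal_ne_top]


/-- For `β : ℝ → ℝ` bounded and Lipschitz with constant `[β]`,
`‖β‖_{W¹_∞} := max{‖β‖_∞, [β]}`, `ν ∈ [1,2]`, and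
`g_ν(u,p,ω) := (ω·p + β(u)|p|^{2−ν})₋`, one has
`‖g_ν(u₁,p₁,ω₁) − g_ν(u₂,p₂,ω₂)‖₂ ≤ ‖ω₁‖_∞‖p₁−p₂‖₂ + ‖p₂‖₂‖ω₁−ω₂‖_∞
  + 2‖β‖_{W¹_∞}‖p₁‖₂^{2−ν}‖u₁−u₂‖₂^{ν−1} + |Ω|^{(ν−1)/2}‖β‖_∞‖p₁−p₂‖₂^{2−ν}`. -/
theorem stmt_3 {n : ℕ} (hn : 1 ≤ n) (Ω : Set (EuclideanSpace ℝ (Fin n)))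
    (hΩopen : IsOpen Ω) (hΩbdd : Bornology.IsBounded Ω)
    (β : ℝ → ℝ) (hβbdd : BddAbove (Set.range fun s => |β s|))
    (Lβ : NNReal) (hβlip : LipschitzWith Lβ β)
    (ν : ℝ) (hν : ν ∈ Set.Icc (1 : ℝ) 2)
    (u₁ u₂ : EuclideanSpace ℝ (Fin n) → ℝ)
    (p₁ p₂ ω₁ ω₂ : EuclideanSpace ℝ (Fin n) → EuclideanSpace ℝ (Fin n))
    (hu₁ : MemLp u₁ 2 (volume.restrict Ω)) (hu₂ : MemLp u₂ 2 (volume.restrict Ω))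
    (hp₁ : MemLp p₁ 2 (volume.restrict Ω)) (hp₂ : MemLp p₂ 2 (volume.restrict Ω))
    (hω₁ : MemLp ω₁ ⊤ (volume.restrict Ω)) (hω₂ : MemLp ω₂ ⊤ (volume.restrict Ω)) :
    eLpNorm
        (fun x => max (-((inner ℝ (ω₁ x) (p₁ x) : ℝ) + β (u₁ x) * ‖p₁ x‖ ^ (2 - ν))) 0 -
          max (-((inner ℝ (ω₂ x) (p₂ x) : ℝ) + β (u₂ x) * ‖p₂ x‖ ^ (2 - ν))) 0) 2
        (volume.restrict Ω)
      ≤ eLpNorm ω₁ ⊤ (volume.restrict Ω) *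
            eLpNorm (fun x => p₁ x - p₂ x) 2 (volume.restrict Ω) +
          eLpNorm p₂ 2 (volume.restrict Ω) *
            eLpNorm (fun x => ω₁ x - ω₂ x) ⊤ (volume.restrict Ω) +
          2 * ENNReal.ofReal (max (⨆ s, |β s|) (Lβ : ℝ)) *
            eLpNorm p₁ 2 (volume.restrict Ω) ^ (2 - ν) *
            eLpNorm (fun x => u₁ x - u₂ x) 2 (volume.restrict Ω) ^ (ν - 1) +
          volume Ω ^ ((ν - 1) / 2) * ENNReal.ofReal (⨆ s, |β s|) *
            eLpNorm (fun x => p₁ x - p₂ x) 2 (volume.restrict Ω) ^ (2 - ν) := by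
  set μ := volume.restrict Ω with hμdef
  set M : ℝ := ⨆ s, |β s| with hMdef
  have hMb : ∀ s, |β s| ≤ M := fun s => le_ciSup hβbdd s
  have hM0 : 0 ≤ M := (abs_nonneg (β 0)).trans (hMb 0)
  set M' : ℝ := max M (Lβ : ℝ) with hM'def
  have hM'0 : 0 ≤ M' := le_trans hM0 (le_max_left _ _)
  obtain ⟨hν1, hν2⟩ := hν
  have ha1 : 0 ≤ 2 - ν := by linarith
  have ha2 : 2 - ν ≤ 1 := by linarith
  have hb1 : 0 ≤ ν - 1 := by linarith
  have hb2 : ν - 1 ≤ 1 := by linarith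
  -- measurability
  have hmu : AEStronglyMeasurable (fun x => u₁ x - u₂ x) μ := hu₁.1.sub hu₂.1
  have hmp : AEStronglyMeasurable (fun x => p₁ x - p₂ x) μ := hp₁.1.sub hp₂.1
  have hF1m : AEStronglyMeasurable (fun x => ‖ω₁ x‖ * ‖p₁ x - p₂ x‖) μ :=
    hω₁.1.norm.mul hmp.norm
  have hF2m : AEStronglyMeasurable (fun x => ‖ω₁ x - ω₂ x‖ * ‖p₂ x‖) μ :=
    (hω₁.1.sub hω₂.1).norm.mul hp₂.1.norm
  have hru : AEStronglyMeasurable (fun x => ‖u₁ x - u₂ x‖ ^ (ν - 1)) μ :=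
    (Real.continuous_rpow_const hb1).comp_aestronglyMeasurable hmu.norm
  have hrp : AEStronglyMeasurable (fun x => ‖p₁ x‖ ^ (2 - ν)) μ :=
    (Real.continuous_rpow_const ha1).comp_aestronglyMeasurable hp₁.1.norm
  have hrpp : AEStronglyMeasurable (fun x => ‖p₁ x - p₂ x‖ ^ (2 - ν)) μ :=
    (Real.continuous_rpow_const ha1).comp_aestronglyMeasurable hmp.norm
  have hF3m : AEStronglyMeasurable
      (fun x => 2 * M' * (‖u₁ x - u₂ x‖ ^ (ν - 1) * ‖p₁ x‖ ^ (2 - ν))) μ :=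
    aestronglyMeasurable_const.mul (hru.mul hrp)
  have hF4m : AEStronglyMeasurable (fun x => M * ‖p₁ x - p₂ x‖ ^ (2 - ν)) μ :=
    aestronglyMeasurable_const.mul hrpp
  -- Lipschitz/bounded estimate for β
  have key : ∀ s t : ℝ, |β s - β t| ≤ 2 * M' * |s - t| ^ (ν - 1) := by
    intro s t
    have l1 : |β s - β t| ≤ (Lβ : ℝ) * |s - t| := by
      have := hβlip.dist_le_mul s t
      rwa [Real.dist_eq, Real.dist_eq] at this
    have l2 : |β s - β t| ≤ 2 * M := by
      calc |β s - β t| ≤ |β s| + |β t| := abs_sub _ _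
        _ ≤ M + M := add_le_add (hMb s) (hMb t)
        _ = 2 * M := by ring
    have l3 : min 1 |s - t| ≤ |s - t| ^ (ν - 1) :=
      min_one_le_rpow (abs_nonneg _) hb1 hb2
    have l4 : |β s - β t| ≤ 2 * M' * min 1 |s - t| := by
      rcases le_total 1 |s - t| with h | h
      · rw [min_eq_left h, mul_one]
        calc |β s - β t| ≤ 2 * M := l2
          _ ≤ 2 * M' := by nlinarith [le_max_left M (Lβ : ℝ)]
      · rw [min_eq_right h]
        calc |β s - β t| ≤ (Lβ : ℝ) * |s - t| := l1
          _ ≤ 2 * M' * |s - t| := by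
            have h1 : (Lβ : ℝ) ≤ M' := le_max_right _ _
            nlinarith [abs_nonneg (s - t)]
    calc |β s - β t| ≤ 2 * M' * min 1 |s - t| := l4
      _ ≤ 2 * M' * |s - t| ^ (ν - 1) := by nlinarith
  -- pointwise bound
  have hpt : ∀ x, ‖max (-((inner ℝ (ω₁ x) (p₁ x) : ℝ) + β (u₁ x) * ‖p₁ x‖ ^ (2 - ν))) 0 -
        max (-((inner ℝ (ω₂ x) (p₂ x) : ℝ) + β (u₂ x) * ‖p₂ x‖ ^ (2 - ν))) 0‖ ≤
      ‖ω₁ x‖ * ‖p₁ x - p₂ x‖ + ‖ω₁ x - ω₂ x‖ * ‖p₂ x‖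
        + 2 * M' * (‖u₁ x - u₂ x‖ ^ (ν - 1) * ‖p₁ x‖ ^ (2 - ν))
        + M * ‖p₁ x - p₂ x‖ ^ (2 - ν) := by
    intro x
    set A := (inner ℝ (ω₁ x) (p₁ x) : ℝ) + β (u₁ x) * ‖p₁ x‖ ^ (2 - ν) with hA
    set B := (inner ℝ (ω₂ x) (p₂ x) : ℝ) + β (u₂ x) * ‖p₂ x‖ ^ (2 - ν) with hB
    have step1 : ‖max (-A) 0 - max (-B) 0‖ ≤ |A - B| := by
      rw [Real.norm_eq_abs]
      calc |max (-A) 0 - max (-B) 0| ≤ |(-A) - (-B)| := abs_max_sub_max_le_abs _ _ _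
        _ = |A - B| := by rw [neg_sub_neg, abs_sub_comm]
    refine step1.trans ?_
    have e1 : A - B = (inner ℝ (ω₁ x) (p₁ x - p₂ x) : ℝ) + (inner ℝ (ω₁ x - ω₂ x) (p₂ x) : ℝ)
        + ((β (u₁ x) - β (u₂ x)) * ‖p₁ x‖ ^ (2 - ν)
          + β (u₂ x) * (‖p₁ x‖ ^ (2 - ν) - ‖p₂ x‖ ^ (2 - ν))) := by
      rw [hA, hB, inner_sub_right, inner_sub_left]; ring
    rw [e1]
    have b1 : |(inner ℝ (ω₁ x) (p₁ x - p₂ x) : ℝ)| ≤ ‖ω₁ x‖ * ‖p₁ x - p₂ x‖ :=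
      abs_real_inner_le_norm _ _
    have b2 : |(inner ℝ (ω₁ x - ω₂ x) (p₂ x) : ℝ)| ≤ ‖ω₁ x - ω₂ x‖ * ‖p₂ x‖ :=
      abs_real_inner_le_norm _ _
    have b3 : |(β (u₁ x) - β (u₂ x)) * ‖p₁ x‖ ^ (2 - ν)|
        ≤ 2 * M' * (‖u₁ x - u₂ x‖ ^ (ν - 1) * ‖p₁ x‖ ^ (2 - ν)) := by
      rw [abs_mul, abs_of_nonneg (Real.rpow_nonneg (norm_nonneg _) _)]
      have hk := key (u₁ x) (u₂ x)
      rw [← Real.norm_eq_abs (u₁ x - u₂ x)] at hk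
      calc |β (u₁ x) - β (u₂ x)| * ‖p₁ x‖ ^ (2 - ν)
          ≤ 2 * M' * ‖u₁ x - u₂ x‖ ^ (ν - 1) * ‖p₁ x‖ ^ (2 - ν) :=
            mul_le_mul_of_nonneg_right hk (Real.rpow_nonneg (norm_nonneg _) _)
        _ = 2 * M' * (‖u₁ x - u₂ x‖ ^ (ν - 1) * ‖p₁ x‖ ^ (2 - ν)) := by ring
    have b4 : |β (u₂ x) * (‖p₁ x‖ ^ (2 - ν) - ‖p₂ x‖ ^ (2 - ν))|
        ≤ M * ‖p₁ x - p₂ x‖ ^ (2 - ν) := by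
      rw [abs_mul]
      have h5 : |‖p₁ x‖ ^ (2 - ν) - ‖p₂ x‖ ^ (2 - ν)| ≤ ‖p₁ x - p₂ x‖ ^ (2 - ν) := by
        refine (abs_rpow_sub_rpow_le (norm_nonneg _) (norm_nonneg _) ha1 ha2).trans ?_
        exact Real.rpow_le_rpow (abs_nonneg _) (abs_norm_sub_norm_le _ _) ha1
      exact mul_le_mul (hMb _) h5 (abs_nonneg _) hM0
    have c1 : |(inner ℝ (ω₁ x) (p₁ x - p₂ x) : ℝ) + (inner ℝ (ω₁ x - ω₂ x) (p₂ x) : ℝ)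
        + ((β (u₁ x) - β (u₂ x)) * ‖p₁ x‖ ^ (2 - ν)
          + β (u₂ x) * (‖p₁ x‖ ^ (2 - ν) - ‖p₂ x‖ ^ (2 - ν)))|
        ≤ |(inner ℝ (ω₁ x) (p₁ x - p₂ x) : ℝ)| + |(inner ℝ (ω₁ x - ω₂ x) (p₂ x) : ℝ)|
          + (|(β (u₁ x) - β (u₂ x)) * ‖p₁ x‖ ^ (2 - ν)|
            + |β (u₂ x) * (‖p₁ x‖ ^ (2 - ν) - ‖p₂ x‖ ^ (2 - ν))|) :=
      (abs_add_le _ _).trans (add_le_add (abs_add_le _ _) (abs_add_le _ _))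
    linarith
  refine le_trans (eLpNorm_mono_real hpt) ?_
  -- triangle inequality
  have tri : eLpNorm (fun x => ‖ω₁ x‖ * ‖p₁ x - p₂ x‖ + ‖ω₁ x - ω₂ x‖ * ‖p₂ x‖
        + 2 * M' * (‖u₁ x - u₂ x‖ ^ (ν - 1) * ‖p₁ x‖ ^ (2 - ν))
        + M * ‖p₁ x - p₂ x‖ ^ (2 - ν)) 2 μ
      ≤ eLpNorm (fun x => ‖ω₁ x‖ * ‖p₁ x - p₂ x‖) 2 μ
        + eLpNorm (fun x => ‖ω₁ x - ω₂ x‖ * ‖p₂ x‖) 2 μ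
        + eLpNorm (fun x => 2 * M' * (‖u₁ x - u₂ x‖ ^ (ν - 1) * ‖p₁ x‖ ^ (2 - ν))) 2 μ
        + eLpNorm (fun x => M * ‖p₁ x - p₂ x‖ ^ (2 - ν)) 2 μ := by
    calc eLpNorm (fun x => ‖ω₁ x‖ * ‖p₁ x - p₂ x‖ + ‖ω₁ x - ω₂ x‖ * ‖p₂ x‖
          + 2 * M' * (‖u₁ x - u₂ x‖ ^ (ν - 1) * ‖p₁ x‖ ^ (2 - ν))
          + M * ‖p₁ x - p₂ x‖ ^ (2 - ν)) 2 μ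
        ≤ eLpNorm (fun x => ‖ω₁ x‖ * ‖p₁ x - p₂ x‖ + ‖ω₁ x - ω₂ x‖ * ‖p₂ x‖
            + 2 * M' * (‖u₁ x - u₂ x‖ ^ (ν - 1) * ‖p₁ x‖ ^ (2 - ν))) 2 μ
          + eLpNorm (fun x => M * ‖p₁ x - p₂ x‖ ^ (2 - ν)) 2 μ :=
          eLpNorm_add_le ((hF1m.add hF2m).add hF3m) hF4m one_le_two
      _ ≤ (eLpNorm (fun x => ‖ω₁ x‖ * ‖p₁ x - p₂ x‖ + ‖ω₁ x - ω₂ x‖ * ‖p₂ x‖) 2 μ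
            + eLpNorm (fun x => 2 * M' * (‖u₁ x - u₂ x‖ ^ (ν - 1) * ‖p₁ x‖ ^ (2 - ν))) 2 μ)
          + eLpNorm (fun x => M * ‖p₁ x - p₂ x‖ ^ (2 - ν)) 2 μ := by
          gcongr
          exact eLpNorm_add_le (hF1m.add hF2m) hF3m one_le_two
      _ ≤ (eLpNorm (fun x => ‖ω₁ x‖ * ‖p₁ x - p₂ x‖) 2 μ
            + eLpNorm (fun x => ‖ω₁ x - ω₂ x‖ * ‖p₂ x‖) 2 μ
            + eLpNorm (fun x => 2 * M' * (‖u₁ x - u₂ x‖ ^ (ν - 1) * ‖p₁ x‖ ^ (2 - ν))) 2 μ)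
          + eLpNorm (fun x => M * ‖p₁ x - p₂ x‖ ^ (2 - ν)) 2 μ := by
          gcongr
          exact eLpNorm_add_le hF1m hF2m one_le_two
  refine tri.trans ?_
  -- term 1
  have T1 : eLpNorm (fun x => ‖ω₁ x‖ * ‖p₁ x - p₂ x‖) 2 μ
      ≤ eLpNorm ω₁ ⊤ μ * eLpNorm (fun x => p₁ x - p₂ x) 2 μ := by
    have h := eLpNorm_smul_le_eLpNorm_top_mul_eLpNorm (μ := μ) 2 hmp.norm (fun x => ‖ω₁ x‖)
    rw [eLpNorm_norm, eLpNorm_norm] at h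
    exact h
  -- term 2
  have T2 : eLpNorm (fun x => ‖ω₁ x - ω₂ x‖ * ‖p₂ x‖) 2 μ
      ≤ eLpNorm p₂ 2 μ * eLpNorm (fun x => ω₁ x - ω₂ x) ⊤ μ := by
    have h := eLpNorm_smul_le_eLpNorm_top_mul_eLpNorm (μ := μ) 2 hp₂.1.norm
      (fun x => ‖ω₁ x - ω₂ x‖)
    rw [eLpNorm_norm, eLpNorm_norm] at h
    exact h.trans_eq (mul_comm _ _)
  -- term 3
  have hq : (1 : ℝ≥0∞) / 2
      = 1 / (2 / ENNReal.ofReal (ν - 1)) + 1 / (2 / ENNReal.ofReal (2 - ν)) := by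
    rw [one_div, one_div, one_div,
      ENNReal.inv_div (Or.inl ENNReal.ofReal_ne_top) (Or.inr (by norm_num)),
      ENNReal.inv_div (Or.inl ENNReal.ofReal_ne_top) (Or.inr (by norm_num)),
      ENNReal.div_add_div_same, ← ENNReal.ofReal_add hb1 ha1]
    norm_num
  have T3 : eLpNorm (fun x => 2 * M' * (‖u₁ x - u₂ x‖ ^ (ν - 1) * ‖p₁ x‖ ^ (2 - ν))) 2 μ
      ≤ 2 * ENNReal.ofReal M' * eLpNorm p₁ 2 μ ^ (2 - ν)
        * eLpNorm (fun x => u₁ x - u₂ x) 2 μ ^ (ν - 1) := by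
    have hsm : eLpNorm (fun x => 2 * M' * (‖u₁ x - u₂ x‖ ^ (ν - 1) * ‖p₁ x‖ ^ (2 - ν))) 2 μ
        = (‖(2 * M' : ℝ)‖₊ : ℝ≥0∞)
          * eLpNorm (fun x => ‖u₁ x - u₂ x‖ ^ (ν - 1) * ‖p₁ x‖ ^ (2 - ν)) 2 μ :=
      eLpNorm_const_smul (2 * M' : ℝ) _ 2 μ
    have hnn : (‖(2 * M' : ℝ)‖₊ : ℝ≥0∞) = 2 * ENNReal.ofReal M' := by
      show ‖(2 * M' : ℝ)‖ₑ = _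
      rw [Real.enorm_eq_ofReal (by linarith), ENNReal.ofReal_mul (by norm_num)]
      norm_num
    have hH := eLpNorm_smul_le_mul_eLpNorm (μ := μ) hrp hru
      (hpqr := ⟨by simpa only [one_div] using hq.symm⟩)
    have hL1 : eLpNorm (fun x => ‖(fun y => u₁ y - u₂ y) x‖ ^ (ν - 1))
        (2 / ENNReal.ofReal (ν - 1)) μ ≤ eLpNorm (fun x => u₁ x - u₂ x) 2 μ ^ (ν - 1) :=
      eLpNorm_norm_rpow_le _ hb1
    have hL2 : eLpNorm (fun x => ‖p₁ x‖ ^ (2 - ν)) (2 / ENNReal.ofReal (2 - ν)) μ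
        ≤ eLpNorm p₁ 2 μ ^ (2 - ν) := eLpNorm_norm_rpow_le _ ha1
    calc eLpNorm (fun x => 2 * M' * (‖u₁ x - u₂ x‖ ^ (ν - 1) * ‖p₁ x‖ ^ (2 - ν))) 2 μ
        = (‖(2 * M' : ℝ)‖₊ : ℝ≥0∞)
          * eLpNorm (fun x => ‖u₁ x - u₂ x‖ ^ (ν - 1) * ‖p₁ x‖ ^ (2 - ν)) 2 μ := hsm
      _ ≤ (‖(2 * M' : ℝ)‖₊ : ℝ≥0∞)
          * (eLpNorm (fun x => ‖u₁ x - u₂ x‖ ^ (ν - 1)) (2 / ENNReal.ofReal (ν - 1)) μ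
            * eLpNorm (fun x => ‖p₁ x‖ ^ (2 - ν)) (2 / ENNReal.ofReal (2 - ν)) μ) := by
          gcongr
          exact hH
      _ ≤ (‖(2 * M' : ℝ)‖₊ : ℝ≥0∞)
          * (eLpNorm (fun x => u₁ x - u₂ x) 2 μ ^ (ν - 1) * eLpNorm p₁ 2 μ ^ (2 - ν)) := by
          gcongr
      _ = 2 * ENNReal.ofReal M' * eLpNorm p₁ 2 μ ^ (2 - ν)
          * eLpNorm (fun x => u₁ x - u₂ x) 2 μ ^ (ν - 1) := by
          rw [hnn]; ring
  -- term 4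
  have T4 : eLpNorm (fun x => M * ‖p₁ x - p₂ x‖ ^ (2 - ν)) 2 μ
      ≤ volume Ω ^ ((ν - 1) / 2) * ENNReal.ofReal M
        * eLpNorm (fun x => p₁ x - p₂ x) 2 μ ^ (2 - ν) := by
    have hsm : eLpNorm (fun x => M * ‖p₁ x - p₂ x‖ ^ (2 - ν)) 2 μ
        = (‖(M : ℝ)‖₊ : ℝ≥0∞) * eLpNorm (fun x => ‖p₁ x - p₂ x‖ ^ (2 - ν)) 2 μ :=
      eLpNorm_const_smul (M : ℝ) _ 2 μ
    have hnn : (‖(M : ℝ)‖₊ : ℝ≥0∞) = ENNReal.ofReal M := Real.enorm_eq_ofReal hM0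
    have hpq : (2 : ℝ≥0∞) ≤ 2 / ENNReal.ofReal (2 - ν) := by
      rw [ENNReal.div_eq_inv_mul]
      conv_lhs => rw [← one_mul (2 : ℝ≥0∞)]
      gcongr
      rw [ENNReal.one_le_inv]
      calc ENNReal.ofReal (2 - ν) ≤ ENNReal.ofReal 1 := ENNReal.ofReal_le_ofReal ha2
        _ = 1 := ENNReal.ofReal_one
    have hcmp := eLpNorm_le_eLpNorm_mul_rpow_measure_univ (μ := μ) hpq hrpp
    have hexp : 1 / (2 : ℝ≥0∞).toReal - 1 / (2 / ENNReal.ofReal (2 - ν)).toReal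
        = (ν - 1) / 2 := by
      rcases eq_or_lt_of_le hν2 with h2 | h2
      · subst h2
        norm_num [ENNReal.div_zero]
      · rw [ENNReal.toReal_div, ENNReal.toReal_ofReal ha1, ENNReal.toReal_ofNat, one_div_div]
        ring
    have huniv : μ Set.univ = volume Ω := Measure.restrict_apply_univ Ω
    calc eLpNorm (fun x => M * ‖p₁ x - p₂ x‖ ^ (2 - ν)) 2 μ
        = ENNReal.ofReal M * eLpNorm (fun x => ‖p₁ x - p₂ x‖ ^ (2 - ν)) 2 μ := by
          rw [hsm, hnn]
      _ ≤ ENNReal.ofReal M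
          * (eLpNorm (fun x => ‖p₁ x - p₂ x‖ ^ (2 - ν)) (2 / ENNReal.ofReal (2 - ν)) μ
            * μ Set.univ ^ (1 / (2 : ℝ≥0∞).toReal - 1 / (2 / ENNReal.ofReal (2 - ν)).toReal)) := by
          gcongr
      _ ≤ ENNReal.ofReal M
          * (eLpNorm (fun x => p₁ x - p₂ x) 2 μ ^ (2 - ν) * volume Ω ^ ((ν - 1) / 2)) := by
          rw [hexp, huniv]
          gcongr
          exact eLpNorm_norm_rpow_le _ ha1
      _ = volume Ω ^ ((ν - 1) / 2) * ENNReal.ofReal M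
          * eLpNorm (fun x => p₁ x - p₂ x) 2 μ ^ (2 - ν) := by ring
  exact add_le_add (add_le_add (add_le_add T1 T2) T3) T4
end

section
/- Let Ω ⊂ ℝⁿ be an open bounded set, let β : ℝ → ℝ be bounded with M := sup|β| and Lipschitz continuous with Lipschitz constant L, and let ν ∈ [1,2]. Then for all u₁, u₂ ∈ L₂(Ω) and p₁ ∈ L₂(Ω, ℝⁿ) one has ‖ |p₁|^{2−ν} (β(u₁) − β(u₂)) ‖₂ ≤ (2M)^{2−ν} L^{ν−1} ‖p₁‖₂^{2−ν} ‖u₁ − u₂‖₂^{ν−1}. -/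
open MeasureTheory

/-- For `β : ℝ → ℝ` bounded with `M := sup|β|` and Lipschitz with
constant `L`, `ν ∈ [1,2]`, `u₁, u₂ ∈ L₂(Ω)`, `p₁ ∈ L₂(Ω,ℝⁿ)`:
`‖ |p₁|^{2−ν}(β(u₁) − β(u₂)) ‖₂ ≤ (2M)^{2−ν} L^{ν−1} ‖p₁‖₂^{2−ν} ‖u₁ − u₂‖₂^{ν−1}`. -/
theorem stmt_5 {n : ℕ} (hn : 1 ≤ n) (Ω : Set (EuclideanSpace ℝ (Fin n)))
    (hΩopen : IsOpen Ω) (hΩbdd : Bornology.IsBounded Ω)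
    (β : ℝ → ℝ) (hβbdd : BddAbove (Set.range fun s => |β s|))
    (L : NNReal) (hβlip : LipschitzWith L β)
    (ν : ℝ) (hν : ν ∈ Set.Icc (1 : ℝ) 2)
    (u₁ u₂ : EuclideanSpace ℝ (Fin n) → ℝ)
    (p₁ : EuclideanSpace ℝ (Fin n) → EuclideanSpace ℝ (Fin n))
    (hu₁ : MemLp u₁ 2 (volume.restrict Ω)) (hu₂ : MemLp u₂ 2 (volume.restrict Ω))
    (hp₁ : MemLp p₁ 2 (volume.restrict Ω)) :
    eLpNorm (fun x => ‖p₁ x‖ ^ (2 - ν) * (β (u₁ x) - β (u₂ x))) 2 (volume.restrict Ω)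
      ≤ ENNReal.ofReal ((2 * ⨆ s, |β s|) ^ (2 - ν) * (L : ℝ) ^ (ν - 1)) *
          eLpNorm p₁ 2 (volume.restrict Ω) ^ (2 - ν) *
          eLpNorm (fun x => u₁ x - u₂ x) 2 (volume.restrict Ω) ^ (ν - 1) := by
  set μ := volume.restrict Ω with hμ
  set M : ℝ := ⨆ s, |β s| with hM
  set a : ℝ := 2 - ν with haa
  set b : ℝ := ν - 1 with hbb
  obtain ⟨hν1, hν2⟩ := hν
  have ha : 0 ≤ a := by simp [haa]; linarith
  have hb : 0 ≤ b := by simp [hbb]; linarith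
  have hab : a + b = 1 := by simp [haa, hbb]; ring
  have hM0 : 0 ≤ M := le_trans (abs_nonneg (β 0)) (le_ciSup hβbdd 0)
  have hβM : ∀ s, |β s| ≤ M := fun s => le_ciSup hβbdd s
  set C : ℝ := (2 * M) ^ a * (L : ℝ) ^ b with hC
  have hC0 : 0 ≤ C := mul_nonneg (Real.rpow_nonneg (by linarith) _) (Real.rpow_nonneg L.coe_nonneg _)
  set u : EuclideanSpace ℝ (Fin n) → ℝ := fun x => u₁ x - u₂ x with hu
  -- pointwise bound
  have hpt : ∀ x, ‖‖p₁ x‖ ^ a * (β (u₁ x) - β (u₂ x))‖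
      ≤ ‖C * (‖p₁ x‖ ^ a * |u x| ^ b)‖ := by
    intro x
    have h1 : |β (u₁ x) - β (u₂ x)| ≤ 2 * M := by
      calc |β (u₁ x) - β (u₂ x)| ≤ |β (u₁ x)| + |β (u₂ x)| := abs_sub _ _
        _ ≤ M + M := add_le_add (hβM _) (hβM _)
        _ = 2 * M := by ring
    have h2 : |β (u₁ x) - β (u₂ x)| ≤ (L : ℝ) * |u x| := by
      have := hβlip.dist_le_mul (u₁ x) (u₂ x)
      simpa [Real.dist_eq, hu] using this
    have h3 : |β (u₁ x) - β (u₂ x)| ≤ (2 * M) ^ a * ((L : ℝ) * |u x|) ^ b := by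
      calc |β (u₁ x) - β (u₂ x)|
          = |β (u₁ x) - β (u₂ x)| ^ a * |β (u₁ x) - β (u₂ x)| ^ b := by
            rw [← Real.rpow_add_of_nonneg (abs_nonneg _) ha hb, hab, Real.rpow_one]
        _ ≤ (2 * M) ^ a * ((L : ℝ) * |u x|) ^ b :=
            mul_le_mul (Real.rpow_le_rpow (abs_nonneg _) h1 ha)
              (Real.rpow_le_rpow (abs_nonneg _) h2 hb)
              (Real.rpow_nonneg (abs_nonneg _) _) (Real.rpow_nonneg (by linarith) _)
    have hnn : 0 ≤ C * (‖p₁ x‖ ^ a * |u x| ^ b) :=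
      mul_nonneg hC0 (mul_nonneg (Real.rpow_nonneg (norm_nonneg _) _)
        (Real.rpow_nonneg (abs_nonneg _) _))
    rw [Real.norm_eq_abs, Real.norm_eq_abs, abs_of_nonneg hnn, abs_mul,
      abs_of_nonneg (Real.rpow_nonneg (norm_nonneg _) _)]
    calc ‖p₁ x‖ ^ a * |β (u₁ x) - β (u₂ x)|
        ≤ ‖p₁ x‖ ^ a * ((2 * M) ^ a * ((L : ℝ) * |u x|) ^ b) :=
          mul_le_mul_of_nonneg_left h3 (Real.rpow_nonneg (norm_nonneg _) _)
      _ = C * (‖p₁ x‖ ^ a * |u x| ^ b) := by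
          rw [Real.mul_rpow L.coe_nonneg (abs_nonneg _)]; ring
  refine le_trans (eLpNorm_mono hpt) ?_
  have hsmul : (fun x => C * (‖p₁ x‖ ^ a * |u x| ^ b))
      = C • (fun x => ‖p₁ x‖ ^ a * |u x| ^ b) := rfl
  rw [hsmul, eLpNorm_const_smul, mul_assoc]
  rw [Real.enorm_eq_ofReal hC0]
  refine mul_le_mul_right ?_ _
  -- now bound eLpNorm of the product via Hölder
  set A : EuclideanSpace ℝ (Fin n) → ENNReal := fun x => (‖p₁ x‖₊ : ENNReal) ^ (2 : ℝ) with hA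
  set B : EuclideanSpace ℝ (Fin n) → ENNReal := fun x => (‖u x‖₊ : ENNReal) ^ (2 : ℝ) with hB
  have hAm : AEMeasurable A μ := hp₁.aestronglyMeasurable.enorm.pow_const _
  have hBm : AEMeasurable B μ :=
    ((hu₁.sub hu₂).aestronglyMeasurable.enorm).pow_const _
  have hps : eLpNorm p₁ 2 μ = (∫⁻ x, A x ∂μ) ^ (1/2 : ℝ) := by
    rw [eLpNorm_eq_lintegral_rpow_enorm_toReal two_ne_zero ENNReal.ofNat_ne_top]
    norm_num [hA, enorm_eq_nnnorm]
  have hus : eLpNorm u 2 μ = (∫⁻ x, B x ∂μ) ^ (1/2 : ℝ) := by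
    rw [eLpNorm_eq_lintegral_rpow_enorm_toReal two_ne_zero ENNReal.ofNat_ne_top]
    norm_num [hB, enorm_eq_nnnorm]
  have hhs : eLpNorm (fun x => ‖p₁ x‖ ^ a * |u x| ^ b) 2 μ
      = (∫⁻ x, A x ^ a * B x ^ b ∂μ) ^ (1/2 : ℝ) := by
    rw [eLpNorm_eq_lintegral_rpow_enorm_toReal two_ne_zero ENNReal.ofNat_ne_top]
    have h2t : (2 : ENNReal).toReal = 2 := by norm_num
    rw [h2t]
    congr 1
    refine lintegral_congr fun x => ?_
    have hnn : 0 ≤ ‖p₁ x‖ ^ a * |u x| ^ b :=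
      mul_nonneg (Real.rpow_nonneg (norm_nonneg _) _) (Real.rpow_nonneg (abs_nonneg _) _)
    have hre : ENNReal.ofReal |u x| = (‖u x‖₊ : ENNReal) := by
      rw [← enorm_eq_nnnorm, ← ofReal_norm_eq_enorm, Real.norm_eq_abs]
    have e0 : (‖‖p₁ x‖ ^ a * |u x| ^ b‖₊ : ENNReal)
        = (‖p₁ x‖₊ : ENNReal) ^ a * (‖u x‖₊ : ENNReal) ^ b := by
      rw [← enorm_eq_nnnorm, ← ofReal_norm_eq_enorm, Real.norm_of_nonneg hnn,
        ENNReal.ofReal_mul (Real.rpow_nonneg (norm_nonneg _) _),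
        ← ENNReal.ofReal_rpow_of_nonneg (norm_nonneg _) ha,
        ← ENNReal.ofReal_rpow_of_nonneg (abs_nonneg _) hb,
        ofReal_norm_eq_enorm, enorm_eq_nnnorm, hre]
    rw [enorm_eq_nnnorm, e0, ENNReal.mul_rpow_of_nonneg _ _ (by norm_num : (0:ℝ) ≤ 2),
      ← ENNReal.rpow_mul, ← ENNReal.rpow_mul, mul_comm a 2, mul_comm b 2,
      ENNReal.rpow_mul, ENNReal.rpow_mul, hA, hB]
  rw [hhs, hps, hus]
  calc (∫⁻ x, A x ^ a * B x ^ b ∂μ) ^ (1/2 : ℝ)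
      ≤ ((∫⁻ x, A x ∂μ) ^ a * (∫⁻ x, B x ∂μ) ^ b) ^ (1/2 : ℝ) :=
        ENNReal.rpow_le_rpow (ENNReal.lintegral_mul_norm_pow_le hAm hBm ha hb hab)
          (by norm_num)
    _ = ((∫⁻ x, A x ∂μ) ^ (1/2 : ℝ)) ^ a * ((∫⁻ x, B x ∂μ) ^ (1/2 : ℝ)) ^ b := by
        rw [ENNReal.mul_rpow_of_nonneg _ _ (by norm_num : (0:ℝ) ≤ 1/2),
          ← ENNReal.rpow_mul, ← ENNReal.rpow_mul, ← ENNReal.rpow_mul, ← ENNReal.rpow_mul,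
          mul_comm a (1/2 : ℝ), mul_comm b (1/2 : ℝ)]
end

section
/- Let Ω ⊂ ℝⁿ be an open bounded set, let β : ℝ → ℝ be bounded with M := sup|β| and Lipschitz continuous with Lipschitz constant L, and let r, q ∈ (2, ∞) satisfy 1/2 = 1/r + 1/q. Define g₁(u,p,ω) := (ω·p + β(u)|p|)₋. Then for all u₁, u₂ ∈ L₂(Ω), p₁, p₂ ∈ L₂(Ω, ℝⁿ) with p₁ ∈ L_r(Ω, ℝⁿ), and ω₁, ω₂ ∈ L_∞(Ω, ℝⁿ) one has ‖g₁(u₁,p₁,ω₁) − g₁(u₂,p₂,ω₂)‖₂ ≤ (‖ω₁‖_∞ + M) ‖p₁ − p₂‖₂ + ‖p₂‖₂ ‖ω₁ − ω₂‖_∞ + (2M)^{1−2/q} L^{2/q} ‖p₁‖_r ‖u₁ − u₂‖₂^{2/q}. -/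
open MeasureTheory
open scoped ENNReal NNReal

private lemma min_le_rpow_mul_rpow {a b θ : ℝ} (ha : 0 ≤ a) (hb : 0 ≤ b)
    (hθ0 : 0 < θ) (hθ1 : θ < 1) : min a b ≤ a ^ (1 - θ) * b ^ θ := by
  rcases eq_or_lt_of_le (le_min ha hb : (0:ℝ) ≤ min a b) with h | h
  · rw [← h]; positivity
  · have h1 : min a b = (min a b) ^ (1 - θ) * (min a b) ^ θ := by
      rw [← Real.rpow_add h, sub_add_cancel, Real.rpow_one]
    rw [h1]
    exact mul_le_mul (Real.rpow_le_rpow h.le (min_le_left _ _) (by linarith))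
      (Real.rpow_le_rpow h.le (min_le_right _ _) hθ0.le)
      (Real.rpow_nonneg (le_min ha hb) _) (Real.rpow_nonneg ha _)

/-- For `β` bounded (`M := sup|β|`) and Lipschitz (constant `L`),
`r, q ∈ (2,∞)` with `1/2 = 1/r + 1/q`, and `g₁(u,p,ω) := (ω·p + β(u)|p|)₋`:
`‖g₁(u₁,p₁,ω₁) − g₁(u₂,p₂,ω₂)‖₂ ≤ (‖ω₁‖_∞ + M)‖p₁−p₂‖₂ + ‖p₂‖₂‖ω₁−ω₂‖_∞
  + (2M)^{1−2/q} L^{2/q} ‖p₁‖_r ‖u₁−u₂‖₂^{2/q}`. -/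
theorem stmt_7 {n : ℕ} (hn : 1 ≤ n) (Ω : Set (EuclideanSpace ℝ (Fin n)))
    (hΩopen : IsOpen Ω) (hΩbdd : Bornology.IsBounded Ω)
    (β : ℝ → ℝ) (hβbdd : BddAbove (Set.range fun s => |β s|))
    (L : NNReal) (hβlip : LipschitzWith L β)
    (r q : ℝ) (hr : 2 < r) (hq : 2 < q) (hrq : 1 / 2 = 1 / r + 1 / q)
    (u₁ u₂ : EuclideanSpace ℝ (Fin n) → ℝ)
    (p₁ p₂ ω₁ ω₂ : EuclideanSpace ℝ (Fin n) → EuclideanSpace ℝ (Fin n))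
    (hu₁ : MemLp u₁ 2 (volume.restrict Ω)) (hu₂ : MemLp u₂ 2 (volume.restrict Ω))
    (hp₁ : MemLp p₁ 2 (volume.restrict Ω))
    (hp₁r : MemLp p₁ (ENNReal.ofReal r) (volume.restrict Ω))
    (hp₂ : MemLp p₂ 2 (volume.restrict Ω))
    (hω₁ : MemLp ω₁ ⊤ (volume.restrict Ω)) (hω₂ : MemLp ω₂ ⊤ (volume.restrict Ω)) :
    eLpNorm
        (fun x => max (-((inner ℝ (ω₁ x) (p₁ x) : ℝ) + β (u₁ x) * ‖p₁ x‖)) 0 -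
          max (-((inner ℝ (ω₂ x) (p₂ x) : ℝ) + β (u₂ x) * ‖p₂ x‖)) 0) 2 (volume.restrict Ω)
      ≤ (eLpNorm ω₁ ⊤ (volume.restrict Ω) + ENNReal.ofReal (⨆ s, |β s|)) *
            eLpNorm (fun x => p₁ x - p₂ x) 2 (volume.restrict Ω) +
          eLpNorm p₂ 2 (volume.restrict Ω) *
            eLpNorm (fun x => ω₁ x - ω₂ x) ⊤ (volume.restrict Ω) +
          ENNReal.ofReal ((2 * ⨆ s, |β s|) ^ (1 - 2 / q) * (L : ℝ) ^ (2 / q)) *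
            eLpNorm p₁ (ENNReal.ofReal r) (volume.restrict Ω) *
            eLpNorm (fun x => u₁ x - u₂ x) 2 (volume.restrict Ω) ^ (2 / q) := by
  set μ := volume.restrict Ω with hμ
  set M : ℝ := ⨆ s, |β s| with hM
  set θ : ℝ := 2 / q with hθ
  have hθ0 : 0 < θ := by positivity
  have hθ1 : θ < 1 := by
    rw [hθ, div_lt_one (by linarith)]; linarith
  have hβM : ∀ s, |β s| ≤ M := fun s => le_ciSup hβbdd s
  have hM0 : 0 ≤ M := (abs_nonneg _).trans (hβM 0)
  set C : ℝ := (2 * M) ^ (1 - θ) * (L : ℝ) ^ θ with hC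
  have hC0 : 0 ≤ C := by positivity
  -- the four dominating functions
  set d : EuclideanSpace ℝ (Fin n) → EuclideanSpace ℝ (Fin n) := fun x => p₁ x - p₂ x with hd
  set w : EuclideanSpace ℝ (Fin n) → EuclideanSpace ℝ (Fin n) := fun x => ω₁ x - ω₂ x with hw
  set v : EuclideanSpace ℝ (Fin n) → ℝ := fun x => u₁ x - u₂ x with hv
  set T₁ : EuclideanSpace ℝ (Fin n) → ℝ := fun x => ‖ω₁ x‖ * ‖d x‖ with hT₁
  set T₂ : EuclideanSpace ℝ (Fin n) → ℝ := fun x => M * ‖d x‖ with hT₂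
  set T₃ : EuclideanSpace ℝ (Fin n) → ℝ := fun x => ‖p₂ x‖ * ‖w x‖ with hT₃
  set T₄ : EuclideanSpace ℝ (Fin n) → ℝ := fun x => C * (‖p₁ x‖ * |v x| ^ θ) with hT₄
  have hdm : AEStronglyMeasurable d μ := (hp₁.sub hp₂).1
  have hwm : AEStronglyMeasurable w μ := (hω₁.sub hω₂).1
  have hvm : AEStronglyMeasurable v μ := (hu₁.sub hu₂).1
  have hvθm : AEStronglyMeasurable (fun x => |v x| ^ θ) μ := by
    have : Continuous fun t : ℝ => |t| ^ θ :=
      continuous_abs.rpow_const fun t => Or.inr hθ0.le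
    exact this.comp_aestronglyMeasurable hvm
  have hT₁m : AEStronglyMeasurable T₁ μ := hω₁.1.norm.mul hdm.norm
  have hT₂m : AEStronglyMeasurable T₂ μ := aestronglyMeasurable_const.mul hdm.norm
  have hT₃m : AEStronglyMeasurable T₃ μ := hp₂.1.norm.mul hwm.norm
  have hT₄m : AEStronglyMeasurable T₄ μ :=
    aestronglyMeasurable_const.mul (hp₁.1.norm.mul hvθm)
  -- pointwise bound
  have key : ∀ x, ‖max (-((inner ℝ (ω₁ x) (p₁ x) : ℝ) + β (u₁ x) * ‖p₁ x‖)) 0 -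
      max (-((inner ℝ (ω₂ x) (p₂ x) : ℝ) + β (u₂ x) * ‖p₂ x‖)) 0‖
      ≤ ‖(fun y => T₁ y + T₂ y + T₃ y + T₄ y) x‖ := by
    intro x
    set a : ℝ := (inner ℝ (ω₁ x) (p₁ x) : ℝ) + β (u₁ x) * ‖p₁ x‖ with ha
    set b : ℝ := (inner ℝ (ω₂ x) (p₂ x) : ℝ) + β (u₂ x) * ‖p₂ x‖ with hb
    have h1 : |max (-a) 0 - max (-b) 0| ≤ |a - b| := by
      calc |max (-a) 0 - max (-b) 0| ≤ |(-a) - (-b)| := abs_max_sub_max_le_abs _ _ _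
        _ = |a - b| := by rw [neg_sub_neg, abs_sub_comm]
    have hab : a - b = (inner ℝ (ω₁ x) (d x) : ℝ) + (inner ℝ (w x) (p₂ x) : ℝ)
        + (β (u₁ x) - β (u₂ x)) * ‖p₁ x‖ + β (u₂ x) * (‖p₁ x‖ - ‖p₂ x‖) := by
      simp only [ha, hb, hd, hw, inner_sub_right, inner_sub_left]
      ring
    have hβd : |β (u₁ x) - β (u₂ x)| ≤ C * |v x| ^ θ := by
      have h2m : |β (u₁ x) - β (u₂ x)| ≤ 2 * M := by
        calc |β (u₁ x) - β (u₂ x)| ≤ |β (u₁ x)| + |β (u₂ x)| := abs_sub _ _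
          _ ≤ 2 * M := by have := hβM (u₁ x); have := hβM (u₂ x); linarith
      have hlip : |β (u₁ x) - β (u₂ x)| ≤ (L : ℝ) * |v x| := by
        have := hβlip.dist_le_mul (u₁ x) (u₂ x)
        simpa [Real.dist_eq, hv] using this
      calc |β (u₁ x) - β (u₂ x)| ≤ min (2 * M) ((L : ℝ) * |v x|) := le_min h2m hlip
        _ ≤ (2 * M) ^ (1 - θ) * ((L : ℝ) * |v x|) ^ θ :=
          min_le_rpow_mul_rpow (by linarith) (by positivity) hθ0 hθ1
        _ = C * |v x| ^ θ := by
          rw [Real.mul_rpow L.coe_nonneg (abs_nonneg _), hC]; ring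
    have habs : |a - b| ≤ T₁ x + T₂ x + T₃ x + T₄ x := by
      rw [hab]
      set A1 : ℝ := (inner ℝ (ω₁ x) (d x) : ℝ) with hA1
      set A2 : ℝ := (inner ℝ (w x) (p₂ x) : ℝ) with hA2
      set A3 : ℝ := (β (u₁ x) - β (u₂ x)) * ‖p₁ x‖ with hA3
      set A4 : ℝ := β (u₂ x) * (‖p₁ x‖ - ‖p₂ x‖) with hA4
      have e1 : |A1| ≤ ‖ω₁ x‖ * ‖d x‖ := abs_real_inner_le_norm _ _
      have e2 : |A2| ≤ ‖p₂ x‖ * ‖w x‖ := by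
        rw [hA2, mul_comm]; exact abs_real_inner_le_norm _ _
      have e3 : |A3| ≤ C * (‖p₁ x‖ * |v x| ^ θ) := by
        rw [hA3, abs_mul, abs_of_nonneg (norm_nonneg _)]
        calc |β (u₁ x) - β (u₂ x)| * ‖p₁ x‖ ≤ (C * |v x| ^ θ) * ‖p₁ x‖ :=
            mul_le_mul_of_nonneg_right hβd (norm_nonneg _)
          _ = C * (‖p₁ x‖ * |v x| ^ θ) := by ring
      have e4 : |A4| ≤ M * ‖d x‖ := by
        rw [hA4, abs_mul]
        exact mul_le_mul (hβM _) (abs_norm_sub_norm_le _ _) (abs_nonneg _) hM0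
      have etri : |A1 + A2 + A3 + A4| ≤ |A1| + |A2| + |A3| + |A4| := by
        calc |A1 + A2 + A3 + A4| ≤ |A1 + A2 + A3| + |A4| := abs_add_le _ _
          _ ≤ (|A1 + A2| + |A3|) + |A4| := by gcongr; exact abs_add_le _ _
          _ ≤ ((|A1| + |A2|) + |A3|) + |A4| := by gcongr; exact abs_add_le _ _
      simp only [hT₁, hT₂, hT₃, hT₄]
      linarith
    have hTnn : 0 ≤ T₁ x + T₂ x + T₃ x + T₄ x := by
      have : 0 ≤ |v x| ^ θ := Real.rpow_nonneg (abs_nonneg _) _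
      simp only [hT₁, hT₂, hT₃, hT₄]
      positivity
    calc ‖max (-a) 0 - max (-b) 0‖ = |max (-a) 0 - max (-b) 0| := Real.norm_eq_abs _
      _ ≤ |a - b| := h1
      _ ≤ T₁ x + T₂ x + T₃ x + T₄ x := habs
      _ ≤ ‖(fun y => T₁ y + T₂ y + T₃ y + T₄ y) x‖ := le_abs_self _
  -- eLpNorm estimates for each piece
  have h₁ : eLpNorm T₁ 2 μ ≤ eLpNorm ω₁ ⊤ μ * eLpNorm d 2 μ :=
    (eLpNorm_le_eLpNorm_top_mul_eLpNorm 2 ω₁ hdm (fun s t => ‖s‖ * ‖t‖) 1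
      (Filter.Eventually.of_forall fun x => by
        simp [nnnorm_mul, nnnorm_norm])).trans_eq (by rw [ENNReal.coe_one, one_mul])
  have h₂ : eLpNorm T₂ 2 μ = ENNReal.ofReal M * eLpNorm d 2 μ := by
    have : T₂ = (M : ℝ) • (fun x => ‖d x‖) := by funext x; simp [hT₂]
    rw [this, eLpNorm_const_smul, eLpNorm_norm, ← ofReal_norm,
      Real.norm_eq_abs, abs_of_nonneg hM0]
  have h₃ : eLpNorm T₃ 2 μ ≤ eLpNorm p₂ 2 μ * eLpNorm w ⊤ μ :=
    (eLpNorm_le_eLpNorm_mul_eLpNorm_top 2 hp₂.1 w (fun s t => ‖s‖ * ‖t‖) 1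
      (Filter.Eventually.of_forall fun x => by
        simp [nnnorm_mul, nnnorm_norm])).trans_eq (by rw [ENNReal.coe_one, one_mul])
  have hrq' : 1 / (2 : ℝ≥0∞) = 1 / ENNReal.ofReal r + 1 / ENNReal.ofReal q := by
    rw [one_div, one_div, one_div, ← ENNReal.ofReal_inv_of_pos (by linarith),
      ← ENNReal.ofReal_inv_of_pos (by linarith), ← ENNReal.ofReal_add (by positivity)
      (by positivity)]
    have h2 : (2 : ℝ≥0∞) = ENNReal.ofReal 2 := by norm_num
    rw [h2, ← ENNReal.ofReal_inv_of_pos (by norm_num)]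
    congr 1
    rw [inv_eq_one_div, hrq]
    simp [one_div]
  have h₄ : eLpNorm T₄ 2 μ ≤ ENNReal.ofReal C * eLpNorm p₁ (ENNReal.ofReal r) μ *
      eLpNorm v 2 μ ^ θ := by
    have hsmul : T₄ = (C : ℝ) • (fun x => ‖p₁ x‖ * |v x| ^ θ) := by
      funext x; simp [hT₄]
    rw [hsmul, eLpNorm_const_smul, ← ofReal_norm, Real.norm_eq_abs,
      abs_of_nonneg hC0, mul_assoc]
    gcongr
    have hhold : eLpNorm (fun x => ‖p₁ x‖ * |v x| ^ θ) 2 μ ≤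
        eLpNorm p₁ (ENNReal.ofReal r) μ * eLpNorm (fun x => |v x| ^ θ) (ENNReal.ofReal q) μ := by
      refine (eLpNorm_le_eLpNorm_mul_eLpNorm'_of_norm
        (hpqr := ⟨by simpa only [one_div] using hrq'.symm⟩) hp₁.1 hvθm
        (fun s t => ‖s‖ * t) 1 (Filter.Eventually.of_forall fun x => ?_)).trans_eq
        (by rw [ENNReal.coe_one, one_mul])
      have h0 : 0 ≤ |v x| ^ θ := Real.rpow_nonneg (abs_nonneg _) _
      rw [Real.norm_eq_abs, abs_mul, abs_of_nonneg (norm_nonneg _), abs_of_nonneg h0,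
        Real.norm_eq_abs, abs_of_nonneg h0, NNReal.coe_one, one_mul]
    refine hhold.trans (le_of_eq ?_)
    congr 1
    have : (fun x => |v x| ^ θ) = fun x => ‖v x‖ ^ θ := by
      funext x; rw [Real.norm_eq_abs]
    rw [this, eLpNorm_norm_rpow v hθ0]
    congr 2
    rw [← ENNReal.ofReal_mul (by linarith)]
    have : q * θ = 2 := by rw [hθ]; field_simp
    rw [this]; norm_num
  -- assemble
  have hmono : eLpNorm (fun x => max (-((inner ℝ (ω₁ x) (p₁ x) : ℝ) + β (u₁ x) * ‖p₁ x‖)) 0 -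
      max (-((inner ℝ (ω₂ x) (p₂ x) : ℝ) + β (u₂ x) * ‖p₂ x‖)) 0) 2 μ ≤
      eLpNorm (fun y => T₁ y + T₂ y + T₃ y + T₄ y) 2 μ := eLpNorm_mono key
  have htri : eLpNorm (fun y => T₁ y + T₂ y + T₃ y + T₄ y) 2 μ ≤
      eLpNorm T₁ 2 μ + eLpNorm T₂ 2 μ + eLpNorm T₃ 2 μ + eLpNorm T₄ 2 μ := by
    calc eLpNorm (fun y => T₁ y + T₂ y + T₃ y + T₄ y) 2 μ
        ≤ eLpNorm (fun y => T₁ y + T₂ y + T₃ y) 2 μ + eLpNorm T₄ 2 μ :=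
          eLpNorm_add_le ((hT₁m.add hT₂m).add hT₃m) hT₄m one_le_two
      _ ≤ (eLpNorm (fun y => T₁ y + T₂ y) 2 μ + eLpNorm T₃ 2 μ) + eLpNorm T₄ 2 μ := by
          gcongr; exact eLpNorm_add_le (hT₁m.add hT₂m) hT₃m one_le_two
      _ ≤ ((eLpNorm T₁ 2 μ + eLpNorm T₂ 2 μ) + eLpNorm T₃ 2 μ) + eLpNorm T₄ 2 μ := by
          gcongr; exact eLpNorm_add_le hT₁m hT₂m one_le_two
  refine hmono.trans (htri.trans ?_)
  rw [add_mul]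
  calc eLpNorm T₁ 2 μ + eLpNorm T₂ 2 μ + eLpNorm T₃ 2 μ + eLpNorm T₄ 2 μ
      ≤ (eLpNorm ω₁ ⊤ μ * eLpNorm d 2 μ + ENNReal.ofReal M * eLpNorm d 2 μ)
        + eLpNorm p₂ 2 μ * eLpNorm w ⊤ μ
        + ENNReal.ofReal C * eLpNorm p₁ (ENNReal.ofReal r) μ * eLpNorm v 2 μ ^ θ := by
        exact add_le_add (add_le_add (add_le_add h₁ h₂.le) h₃) h₄
    _ = _ := by rw [hC]
end

section
/- Let Ω ⊂ ℝⁿ be an open bounded set and let p ∈ (0,1). Define f : L₂(Ω) → L₂(Ω) by f(u) := u|u|^{p−1} (pointwise, with f(u)(x) := 0 where u(x) = 0). Then there exists a constant C > 0 (one may take C = 2^{1−p} |Ω|^{(1−p)/2}) such that ‖f(u) − f(v)‖₂ ≤ C ‖u − v‖₂^p for all u, v ∈ L₂(Ω); i.e., f is uniformly p-Hölder continuous on L₂(Ω). -/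
open MeasureTheory ENNReal

lemma real_rpow_add_le {x y p : ℝ} (hx : 0 ≤ x) (hy : 0 ≤ y) (hp : 0 ≤ p) (hp1 : p ≤ 1) :
    (x + y) ^ p ≤ x ^ p + y ^ p := by
  have := NNReal.rpow_add_le_add_rpow (⟨x, hx⟩) (⟨y, hy⟩) hp hp1
  have h2 := congrArg NNReal.toReal (rfl : ((⟨x, hx⟩ : NNReal) + ⟨y, hy⟩) = ⟨x + y, by positivity⟩)
  exact_mod_cast this

lemma sign_mul_abs_rpow_of_nonneg {p a : ℝ} (hp : 0 < p) (ha : 0 ≤ a) :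
    Real.sign a * |a| ^ p = a ^ p := by
  rcases eq_or_lt_of_le ha with h | h
  · simp [← h, Real.sign_zero, Real.zero_rpow hp.ne']
  · rw [Real.sign_of_pos h, abs_of_pos h, one_mul]

lemma sign_mul_abs_rpow_neg (p a : ℝ) :
    Real.sign (-a) * |(-a)| ^ p = -(Real.sign a * |a| ^ p) := by
  rw [abs_neg, Real.sign_neg, neg_mul]

-- key pointwise estimate, first for 0 ≤ b ≤ a and general b ≤ 0 ≤ a
lemma key_ord {p a b : ℝ} (hp : 0 < p) (hp1 : p ≤ 1) (hb : 0 ≤ b) (hab : b ≤ a) :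
    |Real.sign a * |a| ^ p - Real.sign b * |b| ^ p| ≤ 2 * |a - b| ^ p := by
  have ha : 0 ≤ a := hb.trans hab
  rw [sign_mul_abs_rpow_of_nonneg hp ha, sign_mul_abs_rpow_of_nonneg hp hb]
  have h1 : a ^ p ≤ (a - b) ^ p + b ^ p := by
    have := real_rpow_add_le (x := a - b) (y := b) (by linarith) hb hp.le hp1
    simpa [sub_add_cancel] using this
  have h2 : b ^ p ≤ a ^ p := Real.rpow_le_rpow hb hab hp.le
  have h3 : (0:ℝ) ≤ (a - b) ^ p := Real.rpow_nonneg (by linarith) p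
  rw [abs_of_nonneg (sub_nonneg.mpr h2), abs_of_nonneg (show (0:ℝ) ≤ a - b by linarith)]
  linarith

lemma key_mixed {p a b : ℝ} (hp : 0 < p) (hp1 : p ≤ 1) (hb : b ≤ 0) (ha : 0 ≤ a) :
    |Real.sign a * |a| ^ p - Real.sign b * |b| ^ p| ≤ 2 * |a - b| ^ p := by
  have hb' : Real.sign b * |b| ^ p = -((-b) ^ p) := by
    rw [← neg_neg b, sign_mul_abs_rpow_neg, neg_neg,
      sign_mul_abs_rpow_of_nonneg hp (by linarith)]
  rw [sign_mul_abs_rpow_of_nonneg hp ha, hb', sub_neg_eq_add]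
  have h1 : a ^ p ≤ (a - b) ^ p := Real.rpow_le_rpow ha (by linarith) hp.le
  have h2 : (-b) ^ p ≤ (a - b) ^ p := Real.rpow_le_rpow (by linarith) (by linarith) hp.le
  have ha' : (0:ℝ) ≤ a ^ p := Real.rpow_nonneg ha p
  have hb'' : (0:ℝ) ≤ (-b) ^ p := Real.rpow_nonneg (by linarith) p
  rw [abs_of_nonneg (show (0:ℝ) ≤ a ^ p + (-b) ^ p by linarith),
    abs_of_nonneg (show (0:ℝ) ≤ a - b by linarith)]
  linarith

lemma key_pointwise {p : ℝ} (hp : 0 < p) (hp1 : p ≤ 1) (a b : ℝ) :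
    |Real.sign a * |a| ^ p - Real.sign b * |b| ^ p| ≤ 2 * |a - b| ^ p := by
  have hneg : ∀ a b : ℝ,
      |Real.sign (-a) * |(-a)| ^ p - Real.sign (-b) * |(-b)| ^ p|
        = |Real.sign a * |a| ^ p - Real.sign b * |b| ^ p| := by
    intro a b
    rw [sign_mul_abs_rpow_neg, sign_mul_abs_rpow_neg, ← neg_sub', abs_neg, abs_sub_comm]
  have habs : ∀ a b : ℝ, |(-a) - (-b)| = |a - b| := by
    intro a b; rw [← abs_neg]; ring_nf
  rcases le_total 0 b with hb | hb
  · rcases le_total b a with hab | hab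
    · exact key_ord hp hp1 hb hab
    · rw [abs_sub_comm, abs_sub_comm a b]
      rcases le_total 0 a with ha | ha
      · exact key_ord hp hp1 ha hab
      · exact key_mixed hp hp1 ha hb
  · rcases le_total 0 a with ha | ha
    · exact key_mixed hp hp1 hb ha
    · rw [← hneg, ← habs a b]
      rcases le_total (-b) (-a) with h | h
      · exact key_ord hp hp1 (by linarith) h
      · rw [abs_sub_comm, abs_sub_comm (-a) (-b)]
        exact key_ord hp hp1 (by linarith) h

/-- For `p ∈ (0,1)` and `f(u) := u|u|^{p−1} = sign(u)|u|^p`, there is a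
constant `C > 0` such that `‖f(u) − f(v)‖₂ ≤ C ‖u − v‖₂^p` for all `u, v ∈ L₂(Ω)`;
i.e., `f` is uniformly `p`-Hölder continuous on `L₂(Ω)`. -/
theorem stmt_13 {n : ℕ} (hn : 1 ≤ n) (Ω : Set (EuclideanSpace ℝ (Fin n)))
    (hΩopen : IsOpen Ω) (hΩbdd : Bornology.IsBounded Ω)
    (p : ℝ) (hp : p ∈ Set.Ioo (0 : ℝ) 1) :
    ∃ C > (0 : ℝ), ∀ u v : EuclideanSpace ℝ (Fin n) → ℝ,
      MemLp u 2 (volume.restrict Ω) → MemLp v 2 (volume.restrict Ω) →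
        eLpNorm
            (fun x => Real.sign (u x) * |u x| ^ p - Real.sign (v x) * |v x| ^ p) 2
            (volume.restrict Ω)
          ≤ ENNReal.ofReal C *
              eLpNorm (fun x => u x - v x) 2 (volume.restrict Ω) ^ p := by
  obtain ⟨hp0, hp1⟩ := hp
  set μ := volume.restrict Ω with hμdef
  have hμfin : μ Set.univ ≠ ⊤ := by
    rw [hμdef, Measure.restrict_apply_univ]
    exact hΩbdd.measure_lt_top.ne
  set e : ℝ := (1 - p) / 2 with he
  have he0 : 0 ≤ e := by rw [he]; linarith
  refine ⟨2 * (μ Set.univ).toReal ^ e + 1, by positivity, ?_⟩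
  intro u v hu hv
  have hw : AEStronglyMeasurable (fun x => u x - v x) μ := (hu.sub hv).aestronglyMeasurable
  set W := eLpNorm (fun x => u x - v x) 2 μ with hW
  have h1 : eLpNorm
      (fun x => Real.sign (u x) * |u x| ^ p - Real.sign (v x) * |v x| ^ p) 2 μ
      ≤ eLpNorm (fun x => (2:ℝ) * |u x - v x| ^ p) 2 μ := by
    apply eLpNorm_mono
    intro x
    rw [Real.norm_eq_abs, Real.norm_eq_abs]
    exact (key_pointwise hp0 hp1.le (u x) (v x)).trans (le_abs_self _)
  have h2 : eLpNorm (fun x => (2:ℝ) * |u x - v x| ^ p) 2 μ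
      = 2 * eLpNorm (fun x => |u x - v x| ^ p) 2 μ := by
    rw [show (fun x => (2:ℝ) * |u x - v x| ^ p) = (2:ℝ) • (fun x => |u x - v x| ^ p) from rfl,
      eLpNorm_const_smul]
    congr 1
    rw [Real.enorm_eq_ofReal_abs]; norm_num
  have h3 : eLpNorm (fun x => |u x - v x| ^ p) 2 μ
      = eLpNorm (fun x => u x - v x) (2 * ENNReal.ofReal p) μ ^ p := by
    have := eLpNorm_norm_rpow (p := 2) (μ := μ) (fun x => u x - v x) hp0
    simpa [Real.norm_eq_abs] using this
  have hle : (2 : ℝ≥0∞) * ENNReal.ofReal p ≤ 2 := by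
    calc (2 : ℝ≥0∞) * ENNReal.ofReal p ≤ 2 * 1 := by
          gcongr
          exact ENNReal.ofReal_le_one.mpr hp1.le
      _ = 2 := mul_one 2
  have h4 : eLpNorm (fun x => u x - v x) (2 * ENNReal.ofReal p) μ
      ≤ W * μ Set.univ ^ ((1 / ((2 : ℝ≥0∞) * ENNReal.ofReal p).toReal - 1 / (2:ℝ≥0∞).toReal)) :=
    eLpNorm_le_eLpNorm_mul_rpow_measure_univ hle hw
  have hexp : (1 / ((2 : ℝ≥0∞) * ENNReal.ofReal p).toReal - 1 / (2:ℝ≥0∞).toReal) * p = e := by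
    rw [ENNReal.toReal_mul, ENNReal.toReal_ofReal hp0.le]
    have : ((2:ℝ≥0∞).toReal : ℝ) = 2 := by norm_num
    rw [this]
    field_simp [he]
    ring
  have h5 : eLpNorm (fun x => u x - v x) (2 * ENNReal.ofReal p) μ ^ p
      ≤ W ^ p * μ Set.univ ^ e := by
    calc eLpNorm (fun x => u x - v x) (2 * ENNReal.ofReal p) μ ^ p
        ≤ (W * μ Set.univ ^ ((1 / ((2 : ℝ≥0∞) * ENNReal.ofReal p).toReal - 1 / (2:ℝ≥0∞).toReal))) ^ p :=
          ENNReal.rpow_le_rpow h4 hp0.le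
      _ = W ^ p * μ Set.univ ^ e := by
          rw [ENNReal.mul_rpow_of_nonneg _ _ hp0.le, ← ENNReal.rpow_mul, hexp]
  have hμe : μ Set.univ ^ e = ENNReal.ofReal ((μ Set.univ).toReal ^ e) := by
    rw [ENNReal.toReal_rpow, ENNReal.ofReal_toReal]
    exact ENNReal.rpow_ne_top_of_nonneg he0 hμfin
  have hstep : eLpNorm
      (fun x => Real.sign (u x) * |u x| ^ p - Real.sign (v x) * |v x| ^ p) 2 μ
      ≤ 2 * (W ^ p * μ Set.univ ^ e) := by
    refine h1.trans ?_
    rw [h2, h3]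
    exact mul_le_mul_right h5 2
  refine hstep.trans ?_
  have hrearr : 2 * (W ^ p * μ Set.univ ^ e) = (2 * μ Set.univ ^ e) * W ^ p := by ring
  rw [hrearr]
  have hCbound : (2 : ℝ≥0∞) * μ Set.univ ^ e
      ≤ ENNReal.ofReal (2 * (μ Set.univ).toReal ^ e + 1) := by
    rw [hμe]
    calc (2:ℝ≥0∞) * ENNReal.ofReal ((μ Set.univ).toReal ^ e)
        = ENNReal.ofReal (2 * (μ Set.univ).toReal ^ e) := by
          rw [ENNReal.ofReal_mul (by norm_num)]
          norm_num
      _ ≤ ENNReal.ofReal (2 * (μ Set.univ).toReal ^ e + 1) := by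
          apply ENNReal.ofReal_le_ofReal; linarith [ENNReal.toReal_nonneg (a := μ Set.univ)]
  exact mul_le_mul_left hCbound (W ^ p)
end
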